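/- Let p be an odd prime, g ≥ 1, and for 1 ≤ i ≤ g, 1 ≤ j ≤ g let c_{ip−j} ∈ 𝔽_p[z₁,…,z_{2g−1}] be the coefficient of x^{ip−j} in (x(x−1)∏_{k=1}^{2g−1}(x−z_k))^{(p−1)/2}. Then for fixed j, the supports (sets of exponent tuples of monomials with nonzero coefficient) of c_{p−j}, c_{2p−j}, …, c_{gp−j} are such that the maximal total degree of c_{(i+1)p−j} is strictly less than the minimal total degree of c_{ip−j} for each 1 ≤ i ≤ g−1; in fact the gap is (p+1)/2. In particular, if c_{p−j},…,c_{gp−j} are all nonzero, they are linearly independent over 𝔽_p. -/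

import Mathlib

open MvPolynomial

def Win {σ : Type*} (R : Type*) [CommRing R] (a b : ℕ)
    (P : Polynomial (MvPolynomial σ R)) : Prop :=
  ∀ k : ℕ, ∀ d ∈ (P.coeff k).support,
    a ≤ (d.sum fun _ e => e) + k ∧ (d.sum fun _ e => e) + k ≤ b

lemma win_mul {σ R : Type*} [CommRing R] [DecidableEq σ] {a b a' b' : ℕ}
    {P Q : Polynomial (MvPolynomial σ R)}
    (hP : Win R a b P) (hQ : Win R a' b' Q) : Win R (a + a') (b + b') (P * Q) := by
  intro k d hd
  rw [MvPolynomial.mem_support_iff, Polynomial.coeff_mul, MvPolynomial.coeff_sum] at hd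
  obtain ⟨x, hx, hne⟩ := Finset.exists_ne_zero_of_sum_ne_zero hd
  have hd' : d ∈ (P.coeff x.1 * Q.coeff x.2).support := MvPolynomial.mem_support_iff.2 hne
  obtain ⟨d1, hd1, d2, hd2, hsum⟩ := Finset.mem_add.1 (MvPolynomial.support_mul _ _ hd')
  obtain ⟨h1, h1'⟩ := hP x.1 d1 hd1
  obtain ⟨h2, h2'⟩ := hQ x.2 d2 hd2
  have hk : x.1 + x.2 = k := Finset.HasAntidiagonal.mem_antidiagonal.1 hx
  have hdeg : d.sum (fun _ e => e) = d1.sum (fun _ e => e) + d2.sum (fun _ e => e) := by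
    rw [← hsum]; exact Finsupp.sum_add_index' (fun _ => rfl) (fun _ _ _ => rfl)
  omega

lemma win_one {σ R : Type*} [CommRing R] [Nontrivial R] [DecidableEq σ] : Win (σ := σ) R 0 0 1 := by
  intro k d hd
  rw [MvPolynomial.mem_support_iff, Polynomial.coeff_one] at hd
  split_ifs at hd with h
  · subst h
    rw [MvPolynomial.coeff_one] at hd
    split_ifs at hd with h2
    · subst h2; simp
    · simp at hd
  · simp at hd

lemma win_pow {σ R : Type*} [CommRing R] [Nontrivial R] [DecidableEq σ] {a b : ℕ}
    {P : Polynomial (MvPolynomial σ R)} (hP : Win R a b P) (n : ℕ) :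
    Win R (n * a) (n * b) (P ^ n) := by
  induction n with
  | zero => simpa using win_one
  | succ n ih =>
      have := win_mul ih hP
      rw [pow_succ]
      have e1 : (n + 1) * a = n * a + a := by ring
      have e2 : (n + 1) * b = n * b + b := by ring
      rwa [e1, e2]

lemma win_X {σ R : Type*} [CommRing R] [Nontrivial R] [DecidableEq σ] :
    Win (σ := σ) R 1 1 Polynomial.X := by
  intro k d hd
  rw [MvPolynomial.mem_support_iff, Polynomial.coeff_X] at hd
  split_ifs at hd with h
  · subst h
    rw [MvPolynomial.coeff_one] at hd
    split_ifs at hd with h2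
    · subst h2; simp
    · simp at hd
  · simp at hd

lemma win_X_sub_one {σ R : Type*} [CommRing R] [Nontrivial R] [DecidableEq σ] :
    Win (σ := σ) R 0 1 (Polynomial.X - 1) := by
  intro k d hd
  rw [MvPolynomial.mem_support_iff, Polynomial.coeff_sub, Polynomial.coeff_X,
    Polynomial.coeff_one] at hd
  rcases Nat.lt_or_ge k 2 with h | h
  · interval_cases k <;> simp_all <;>
    · rw [MvPolynomial.coeff_one] at hd
      split_ifs at hd with h2
      · subst h2; simp
      · simp at hd
  · exfalso; apply hd
    rw [if_neg (by omega), if_neg (by omega)]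
    simp

lemma win_X_sub_C {σ R : Type*} [CommRing R] [Nontrivial R] [DecidableEq σ] (t : σ) :
    Win R 1 1 (Polynomial.X - Polynomial.C (MvPolynomial.X t)) := by
  intro k d hd
  rw [MvPolynomial.mem_support_iff, Polynomial.coeff_sub, Polynomial.coeff_X,
    Polynomial.coeff_C] at hd
  rcases Nat.lt_or_ge k 2 with h | h
  · interval_cases k
    · rw [if_neg (by omega), if_pos rfl, zero_sub, MvPolynomial.coeff_neg,
        neg_ne_zero, MvPolynomial.coeff_X'] at hd
      split_ifs at hd with h2
      · subst h2
        constructor <;> simp [Finsupp.sum_single_index]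
      · simp at hd
    · rw [if_pos rfl, if_neg (by omega), sub_zero] at hd
      rw [MvPolynomial.coeff_one] at hd
      split_ifs at hd with h2
      · subst h2; simp
      · simp at hd
  · exfalso; apply hd
    rw [if_neg (by omega), if_neg (by omega)]
    simp

lemma win_prod {σ R : Type*} [CommRing R] [Nontrivial R] [DecidableEq σ] (s : Finset σ) :
    Win R s.card s.card (∏ t ∈ s, (Polynomial.X - Polynomial.C (MvPolynomial.X t))) := by
  induction s using Finset.induction with
  | empty => simpa using win_one
  | insert _ _ hnm ih =>
      rename_i a s'
      rw [Finset.prod_insert hnm, Finset.card_insert_of_notMem hnm]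
      have := win_mul (win_X_sub_C a) ih
      rwa [add_comm 1 s'.card] at this

/-- For fixed `j`, the total degrees of the monomials of `c_{(i+1)p−j}` are smaller
than those of `c_{ip−j}` by at least the gap `(p+1)/2`; in particular, if
`c_{p−j}, …, c_{gp−j}` are all nonzero then they are linearly independent over `𝔽_p`. -/
theorem cartier_manin_entries_degree_gap (p : ℕ) (hp : p.Prime) (hodd : Odd p)
    (g : ℕ) (hg1 : 1 ≤ g)
    (c : ℕ → MvPolynomial (Fin (2 * g - 1)) (ZMod p))
    (hc : ∀ k : ℕ, c k = Polynomial.coeff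
      ((Polynomial.X * (Polynomial.X - 1)
          * ∏ t : Fin (2 * g - 1), (Polynomial.X - Polynomial.C (MvPolynomial.X t))
        : Polynomial (MvPolynomial (Fin (2 * g - 1)) (ZMod p))) ^ ((p - 1) / 2)) k)
    (j : ℕ) (hj1 : 1 ≤ j) (hjg : j ≤ g) :
    (∀ i : ℕ, 1 ≤ i → i ≤ g - 1 →
      ∀ d ∈ (c ((i + 1) * p - j)).support, ∀ d' ∈ (c (i * p - j)).support,
        (d.sum fun _ e => e) + (p + 1) / 2 ≤ (d'.sum fun _ e => e))
    ∧ ((∀ i : ℕ, 1 ≤ i → i ≤ g → c (i * p - j) ≠ 0) →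
        LinearIndependent (ZMod p) (fun i : Fin g => c ((i.val + 1) * p - j))) := by
  haveI := Fact.mk hp
  set n := (p - 1) / 2 with hn
  set F : Polynomial (MvPolynomial (Fin (2 * g - 1)) (ZMod p)) :=
    Polynomial.X * (Polynomial.X - 1)
      * ∏ t : Fin (2 * g - 1), (Polynomial.X - Polynomial.C (MvPolynomial.X t)) with hF
  have hp2 : p ≠ 2 := by rintro rfl; simp [Nat.odd_iff] at hodd
  have hp3 : 3 ≤ p := by have := hp.two_le; omega
  obtain ⟨m, hm⟩ := hodd
  have hn1 : 1 ≤ n := by omega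
  have hWF : Win (ZMod p) (2 * g) (2 * g + 1) F := by
    have h := win_mul (win_mul win_X win_X_sub_one)
      (win_prod (R := ZMod p) (Finset.univ : Finset (Fin (2 * g - 1))))
    rw [Finset.card_univ, Fintype.card_fin] at h
    have e1 : 1 + 0 + (2 * g - 1) = 2 * g := by omega
    have e2 : 1 + 1 + (2 * g - 1) = 2 * g + 1 := by omega
    rw [e1, e2] at h
    rw [hF]
    exact h
  have hW : Win (ZMod p) (n * (2 * g)) (n * (2 * g + 1)) (F ^ n) := win_pow hWF n
  have h0 : (F ^ n).coeff 0 = 0 := by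
    have hcF : Polynomial.constantCoeff F = 0 := by
      rw [hF, map_mul, map_mul]; simp [Polynomial.constantCoeff_apply]
    have : Polynomial.constantCoeff (F ^ n) = 0 := by
      rw [map_pow, hcF, zero_pow (by omega : n ≠ 0)]
    exact this
  have hc0 : c 0 = 0 := by rw [hc 0]; exact h0
  constructor
  · intro i hi1 hig d hd d' hd'
    rw [hc] at hd hd'
    by_cases hji : j ≤ i * p
    · have h1 := (hW ((i + 1) * p - j) d hd).2
      have h2 := (hW (i * p - j) d' hd').1
      have e1 : (i + 1) * p = i * p + p := by ring
      have e2 : n * (2 * g + 1) = n * (2 * g) + n := by ring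
      set K1 := (i + 1) * p
      set K := i * p
      set A := n * (2 * g)
      set B := n * (2 * g + 1)
      set D1 := d.sum fun _ e => e
      set D2 := d'.sum fun _ e => e
      omega
    · exfalso
      have hz : i * p - j = 0 := by omega
      rw [hz, h0] at hd'
      simp at hd'
  · intro hnz
    have hjlt : ∀ i : ℕ, 1 ≤ i → i ≤ g → j < i * p := by
      intro i h1 h2
      by_contra h
      have hz : i * p - j = 0 := by omega
      exact hnz i h1 h2 (hz ▸ hc0)
    have disj : ∀ a b : ℕ, a < b → j ≤ a * p →
        ∀ d, d ∈ (c (a * p - j)).support → d ∉ (c (b * p - j)).support := by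
      intro a b hab hja d hda hdb
      rw [hc] at hda hdb
      have h1 := (hW (a * p - j) d hda).1
      have h2 := (hW (b * p - j) d hdb).2
      have hmul : a * p + p ≤ b * p := by
        calc a * p + p = (a + 1) * p := by ring
          _ ≤ b * p := Nat.mul_le_mul_right p (by omega)
      have e2 : n * (2 * g + 1) = n * (2 * g) + n := by ring
      set Ka := a * p
      set Kb := b * p
      set A := n * (2 * g)
      set B := n * (2 * g + 1)
      set D := d.sum fun _ e => e
      omega
    rw [linearIndependent_iff']
    intro s f hsum i his
    have hilt := i.isLt
    have hvne : c ((i.val + 1) * p - j) ≠ 0 := hnz (i.val + 1) (by omega) (by omega)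
    obtain ⟨d, hd⟩ := Finset.nonempty_iff_ne_empty.2
      (fun h => hvne (MvPolynomial.support_eq_empty.1 h))
    have hcoeff := congrArg (MvPolynomial.coeff d) hsum
    simp only [MvPolynomial.coeff_sum, MvPolynomial.coeff_smul, MvPolynomial.coeff_zero]
      at hcoeff
    rw [Finset.sum_eq_single i] at hcoeff
    · have hne : MvPolynomial.coeff d (c ((i.val + 1) * p - j)) ≠ 0 :=
        MvPolynomial.mem_support_iff.1 hd
      rw [smul_eq_mul] at hcoeff
      rcases mul_eq_zero.1 hcoeff with h | h
      · exact h
      · exact absurd h hne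
    · intro i' hi's hne'
      have hnot : d ∉ (c ((i'.val + 1) * p - j)).support := by
        rcases lt_or_gt_of_ne hne' with h | h
        · intro hmem
          have hjle : j ≤ (i'.val + 1) * p :=
            le_of_lt (hjlt (i'.val + 1) (by omega) (by omega))
          exact disj (i'.val + 1) (i.val + 1) (by exact_mod_cast Nat.add_lt_add_right h 1)
            hjle d hmem hd
        · have hjle : j ≤ (i.val + 1) * p :=
            le_of_lt (hjlt (i.val + 1) (by omega) (by omega))
          exact disj (i.val + 1) (i'.val + 1) (by exact_mod_cast Nat.add_lt_add_right h 1)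
            hjle d hd
      rw [MvPolynomial.notMem_support_iff.1 hnot, smul_zero]
    · intro h; exact absurd his h
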